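/- Let (A, B) be a separating pair of continuous aggregation functions on [0,1]². Then the map ϱ_{A,B} satisfies the triangle inequality: for all α, β, γ ∈ Ĩ, ϱ_{A,B}(α, β) + ϱ_{A,B}(β, γ) ≥ ϱ_{A,B}(α, γ). -/
import Mathlib


/-- The set of intuitionistic fuzzy values (IFVs). -/
def Itilde : Set (ℝ × ℝ) :=
  {p | 0 ≤ p.1 ∧ p.1 ≤ 1 ∧ 0 ≤ p.2 ∧ p.2 ≤ 1 ∧ p.1 + p.2 ≤ 1}

/-- An aggregation function on `[0,1]²`. -/
structure IsAggregation (A : ℝ → ℝ → ℝ) : Prop where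
  mapsTo : ∀ x y, x ∈ Set.Icc (0 : ℝ) 1 → y ∈ Set.Icc (0 : ℝ) 1 →
    A x y ∈ Set.Icc (0 : ℝ) 1
  mono_left : ∀ x₁ x₂ y, x₁ ∈ Set.Icc (0 : ℝ) 1 → x₂ ∈ Set.Icc (0 : ℝ) 1 →
    y ∈ Set.Icc (0 : ℝ) 1 → x₁ ≤ x₂ → A x₁ y ≤ A x₂ y
  mono_right : ∀ x y₁ y₂, x ∈ Set.Icc (0 : ℝ) 1 → y₁ ∈ Set.Icc (0 : ℝ) 1 →
    y₂ ∈ Set.Icc (0 : ℝ) 1 → y₁ ≤ y₂ → A x y₁ ≤ A x y₂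
  zero : A 0 0 = 0
  one : A 1 1 = 1

/-- `Ā(α) = A(μ_α, 1 - ν_α)`. -/
def aggBar (A : ℝ → ℝ → ℝ) (p : ℝ × ℝ) : ℝ := A p.1 (1 - p.2)

/-- The distance measure `ϱ_{A,B}`. -/
noncomputable def vrhoAB (A B : ℝ → ℝ → ℝ) (a b : ℝ × ℝ) : ℝ :=
  if aggBar A a ≠ aggBar A b then (1 + |aggBar A a - aggBar A b|) / 2
  else |aggBar B a - aggBar B b| / 2


lemma aggBar_mem (A : ℝ → ℝ → ℝ) (hA : IsAggregation A) (p : ℝ × ℝ)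
    (hp : p ∈ Itilde) : aggBar A p ∈ Set.Icc (0 : ℝ) 1 := by
  obtain ⟨h1, h2, h3, h4, h5⟩ := hp
  exact hA.mapsTo p.1 (1 - p.2) ⟨h1, h2⟩ ⟨by linarith, by linarith⟩

/-- For a separating pair `(A, B)` of continuous aggregation functions,
`ϱ_{A,B}` satisfies the triangle inequality on `Ĩ`. -/
theorem vrhoAB_triangle (A B : ℝ → ℝ → ℝ)
    (hA : IsAggregation A) (hB : IsAggregation B)
    (hAc : ContinuousOn (fun p : ℝ × ℝ => A p.1 p.2)
      (Set.Icc (0 : ℝ) 1 ×ˢ Set.Icc (0 : ℝ) 1))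
    (hBc : ContinuousOn (fun p : ℝ × ℝ => B p.1 p.2)
      (Set.Icc (0 : ℝ) 1 ×ˢ Set.Icc (0 : ℝ) 1))
    (hsep : ∀ x₁ y₁ x₂ y₂, x₁ ∈ Set.Icc (0 : ℝ) 1 → y₁ ∈ Set.Icc (0 : ℝ) 1 →
      x₂ ∈ Set.Icc (0 : ℝ) 1 → y₂ ∈ Set.Icc (0 : ℝ) 1 →
      A x₁ y₁ = A x₂ y₂ → B x₁ y₁ = B x₂ y₂ → x₁ = x₂ ∧ y₁ = y₂)
    (a b c : ℝ × ℝ) (ha : a ∈ Itilde) (hb : b ∈ Itilde) (hc : c ∈ Itilde) :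
    vrhoAB A B a b + vrhoAB A B b c ≥ vrhoAB A B a c := by
  obtain ⟨ha0, ha1⟩ := aggBar_mem A hA a ha
  obtain ⟨hb0, hb1⟩ := aggBar_mem A hA b hb
  obtain ⟨hc0, hc1⟩ := aggBar_mem A hA c hc
  obtain ⟨Ba0, Ba1⟩ := aggBar_mem B hB a ha
  obtain ⟨Bb0, Bb1⟩ := aggBar_mem B hB b hb
  obtain ⟨Bc0, Bc1⟩ := aggBar_mem B hB c hc
  by_cases hab : aggBar A a = aggBar A b
  · by_cases hbc : aggBar A b = aggBar A c
    · have hac : aggBar A a = aggBar A c := hab.trans hbc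
      rw [vrhoAB, vrhoAB, vrhoAB, if_neg (not_not_intro hab), if_neg (not_not_intro hbc),
        if_neg (not_not_intro hac)]
      linarith [abs_sub_le (aggBar B a) (aggBar B b) (aggBar B c)]
    · have hac : aggBar A a ≠ aggBar A c := fun h => hbc (hab.symm.trans h)
      rw [vrhoAB, vrhoAB, vrhoAB, if_neg (not_not_intro hab), if_pos hbc, if_pos hac, hab]
      linarith [abs_nonneg (aggBar B a - aggBar B b)]
  · by_cases hbc : aggBar A b = aggBar A c
    · have hac : aggBar A a ≠ aggBar A c := fun h => hab (h.trans hbc.symm)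
      rw [vrhoAB, vrhoAB, vrhoAB, if_pos hab, if_neg (not_not_intro hbc), if_pos hac, hbc]
      linarith [abs_nonneg (aggBar B b - aggBar B c)]
    · by_cases hac : aggBar A a = aggBar A c
      · rw [vrhoAB, vrhoAB, vrhoAB, if_pos hab, if_pos hbc, if_neg (not_not_intro hac)]
        have h3 : |aggBar B a - aggBar B c| ≤ 1 := by
          rw [abs_sub_le_iff]; constructor <;> linarith
        linarith [abs_nonneg (aggBar A a - aggBar A b), abs_nonneg (aggBar A b - aggBar A c)]
      · rw [vrhoAB, vrhoAB, vrhoAB, if_pos hab, if_pos hbc, if_pos hac]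
        have h3 : |aggBar A a - aggBar A c| ≤ 1 := by
          rw [abs_sub_le_iff]; constructor <;> linarith
        linarith [abs_nonneg (aggBar A a - aggBar A b), abs_nonneg (aggBar A b - aggBar A c)]
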